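/- The derivative of the monodromy of the round cylinder vanishes at λ = 1: with M(λ) = F_λ(1), one has M'(1) = 0, where the derivative is with respect to λ (using a holomorphic branch of λ^{1/2} near 1 with 1^{1/2}=1). -/

import Mathlib

open Complex Matrix

lemma cpow_hasDerivAt_one (c : ℂ) : HasDerivAt (fun l : ℂ => l ^ c) c 1 := by
  have h := (hasDerivAt_id (1 : ℂ)).cpow_const (c := c) (by left; norm_num)
  simpa using h

lemma mu_hasDerivAt (μ : ℂ → ℂ)
    (hμ : ∀ lam : ℂ, μ lam = (Real.pi / 2 : ℂ) * (lam ^ (-(1/2) : ℂ) + lam ^ ((1/2) : ℂ))) :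
    HasDerivAt μ 0 1 := by
  have h := (((cpow_hasDerivAt_one (-(1/2))).add (cpow_hasDerivAt_one (1/2))).const_mul
    ((Real.pi / 2 : ℂ)))
  have hfun : μ = fun lam => (Real.pi / 2 : ℂ) * (lam ^ (-(1/2) : ℂ) + lam ^ ((1/2) : ℂ)) :=
    funext hμ
  rw [hfun]
  simpa using h

lemma mu_one (μ : ℂ → ℂ)
    (hμ : ∀ lam : ℂ, μ lam = (Real.pi / 2 : ℂ) * (lam ^ (-(1/2) : ℂ) + lam ^ ((1/2) : ℂ))) :
    μ 1 = (Real.pi : ℂ) := by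
  rw [hμ 1, one_cpow, one_cpow]; ring

theorem round_cylinder_monodromy_deriv_vanishes
    (μ : ℂ → ℂ) (hμ : ∀ lam : ℂ, μ lam = (Real.pi / 2 : ℂ) * (lam ^ (-(1/2) : ℂ) + lam ^ ((1/2) : ℂ)))
    (M : ℂ → Matrix (Fin 2) (Fin 2) ℂ)
    (hM : ∀ lam : ℂ, M lam =
      !![Complex.cos (μ lam), Complex.I * lam ^ (-(1/2) : ℂ) * Complex.sin (μ lam);
         Complex.I * lam ^ ((1/2) : ℂ) * Complex.sin (μ lam), Complex.cos (μ lam)]) :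
    ∀ i j : Fin 2, deriv (fun lam : ℂ => M lam i j) 1 = 0 := by
  have hμ' : HasDerivAt μ 0 1 := mu_hasDerivAt μ hμ
  have hμ1 : μ 1 = (Real.pi : ℂ) := mu_one μ hμ
  have hsin : Complex.sin (μ 1) = 0 := by
    rw [hμ1, ← Complex.ofReal_sin, Real.sin_pi, Complex.ofReal_zero]
  have hcos : HasDerivAt (fun l => Complex.cos (μ l)) 0 1 := by
    simpa using hμ'.ccos
  have hsinμ : HasDerivAt (fun l => Complex.sin (μ l)) 0 1 := by
    simpa using hμ'.csin
  have hoff : ∀ c : ℂ, HasDerivAt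
      (fun l : ℂ => Complex.I * l ^ c * Complex.sin (μ l)) 0 1 := by
    intro c
    have h := ((cpow_hasDerivAt_one c).const_mul Complex.I).mul hsinμ
    simp [hsin] at h
    exact h
  intro i j
  have key : (fun lam : ℂ => M lam i j) =
      (fun lam : ℂ => (!![Complex.cos (μ lam), Complex.I * lam ^ (-(1/2) : ℂ) * Complex.sin (μ lam);
         Complex.I * lam ^ ((1/2) : ℂ) * Complex.sin (μ lam), Complex.cos (μ lam)]) i j) := by
    funext lam; rw [hM lam]
  rw [key]
  fin_cases i <;> fin_cases j <;>
    simp only [Matrix.cons_val', Matrix.cons_val_zero, Matrix.cons_val_one, Matrix.head_cons,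
      Matrix.empty_val', Matrix.cons_val_fin_one, Matrix.head_fin_const, Fin.isValue,
      Matrix.cons_val_zero, Fin.zero_eta, Fin.mk_one] <;>
    first
      | exact hcos.deriv
      | exact (hoff _).deriv
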